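/- arXiv:1807.00654 — 2 statements merged into one kernel-verified Lean document; each statement's English description precedes it below -/
import Mathlib

section
/- Let J be a d×d real matrix diagonalizable with d distinct real eigenvalues λ_1, …, λ_d and corresponding unit eigenvectors v_1, …, v_d that are pairwise orthogonal. Fix an index i. Then the block lower-triangular 2d×2d matrix with diagonal blocks N₁ = J - 2λ_i v_i v_iᵀ and M₁ = J - λ_i I - v_i v_iᵀ(λ_i I + J) has spectrum consisting of -2λ_i, -λ_i, {λ_j : j ≠ i}, and {λ_j - λ_i : j ≠ i}. -/
open Matrix

/-- Membership in matrix spectrum via determinant. -/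
private lemma spec_det {n : ℕ} (A : Matrix (Fin n) (Fin n) ℝ) (x : ℝ) :
    x ∈ spectrum ℝ A ↔ (x • (1 : Matrix (Fin n) (Fin n) ℝ) - A).det = 0 := by
  rw [spectrum.mem_iff, Algebra.algebraMap_eq_smul_one]
  rw [Matrix.isUnit_iff_isUnit_det, isUnit_iff_ne_zero, not_not]

private lemma spec_blocks {n : ℕ} (A C D : Matrix (Fin n) (Fin n) ℝ) :
    spectrum ℝ (Matrix.fromBlocks A 0 C D) = spectrum ℝ A ∪ spectrum ℝ D := by
  ext x
  have h1 : x • (1 : Matrix (Fin n ⊕ Fin n) (Fin n ⊕ Fin n) ℝ) - Matrix.fromBlocks A 0 C D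
      = Matrix.fromBlocks (x • 1 - A) 0 (-C) (x • 1 - D) := by
    rw [← Matrix.fromBlocks_one, Matrix.fromBlocks_smul, sub_eq_add_neg,
      Matrix.fromBlocks_neg, Matrix.fromBlocks_add]
    congr 1 <;> simp [sub_eq_add_neg]
  have hx : x ∈ spectrum ℝ (fromBlocks A 0 C D) ↔
      (x • (1 : Matrix (Fin n ⊕ Fin n) (Fin n ⊕ Fin n) ℝ) - fromBlocks A 0 C D).det = 0 := by
    rw [spectrum.mem_iff, Algebra.algebraMap_eq_smul_one,
      Matrix.isUnit_iff_isUnit_det, isUnit_iff_ne_zero, not_not]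
  rw [Set.mem_union, hx, h1, Matrix.det_fromBlocks_zero₁₂, mul_eq_zero,
    spec_det, spec_det]

/-- For `J` with `d` distinct real eigenvalues and orthonormal eigenvectors, the block
lower-triangular matrix with diagonal blocks `N₁ = J - 2 λᵢ vᵢ vᵢᵀ` and
`M₁ = J - λᵢ I - vᵢ vᵢᵀ (λᵢ I + J)` (and arbitrary lower-left block `C`) has spectrum
`{-2λᵢ, -λᵢ} ∪ {λⱼ : j ≠ i} ∪ {λⱼ - λᵢ : j ≠ i}`. -/
theorem stmt6 {d : ℕ} (J : Matrix (Fin d) (Fin d) ℝ) (lam : Fin d → ℝ)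
    (v : Fin d → (Fin d → ℝ))
    (hdist : Function.Injective lam)
    (heig : ∀ j, J.mulVec (v j) = lam j • v j)
    (horth : ∀ j k, v j ⬝ᵥ v k = if j = k then 1 else 0)
    (i : Fin d) (C : Matrix (Fin d) (Fin d) ℝ) :
    spectrum ℝ
        (Matrix.fromBlocks
          (J - (2 * lam i) • Matrix.vecMulVec (v i) (v i)) 0 C
          (J - lam i • (1 : Matrix (Fin d) (Fin d) ℝ)
            - Matrix.vecMulVec (v i) (v i) * (lam i • (1 : Matrix (Fin d) (Fin d) ℝ) + J)))
      = {x : ℝ | x = -(2 * lam i) ∨ x = -(lam i) ∨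
          (∃ j, j ≠ i ∧ x = lam j) ∨ (∃ j, j ≠ i ∧ x = lam j - lam i)} := by
  classical
  set P : Matrix (Fin d) (Fin d) ℝ := Matrix.of v with hPdef
  have hPPt : P * Pᵀ = 1 := by
    ext j k
    simpa [Matrix.mul_apply, Matrix.one_apply, dotProduct, hPdef] using horth j k
  have hPtP : Pᵀ * P = 1 := mul_eq_one_comm.mp hPPt
  set u : (Matrix (Fin d) (Fin d) ℝ)ˣ := ⟨Pᵀ, P, hPtP, hPPt⟩ with hu
  -- general similarity lemma
  have key : ∀ (X : Matrix (Fin d) (Fin d) ℝ) (μ : Fin d → ℝ),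
      (∀ k, X *ᵥ v k = μ k • v k) → spectrum ℝ X = Set.range μ := by
    intro X μ hμ
    have hXPt : X * Pᵀ = Pᵀ * Matrix.diagonal μ := by
      ext a k
      have := congrFun (hμ k) a
      simp only [Matrix.mulVec, dotProduct, Pi.smul_apply, smul_eq_mul] at this
      simp only [Matrix.mul_apply, Matrix.diagonal, Matrix.transpose_apply, hPdef,
        Matrix.of_apply]
      calc (∑ x, X a x * v k x) = μ k * v k a := this
        _ = ∑ x, v x a * (if x = k then μ x else 0) := by
            rw [Finset.sum_eq_single k]
            · simp [mul_comm]
            · intro b _ hb; simp [hb]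
            · simp
    have hX : X = u.val * Matrix.diagonal μ * u⁻¹.val := by
      show X = Pᵀ * Matrix.diagonal μ * P
      have h3 : X * (Pᵀ * P) = Pᵀ * Matrix.diagonal μ * P := by
        rw [← Matrix.mul_assoc, hXPt]
      rwa [hPtP, mul_one] at h3
    rw [hX, spectrum.units_conjugate, spectrum_diagonal]
  have hvv : ∀ x : Fin d → ℝ, Matrix.vecMulVec (v i) (v i) *ᵥ x = (v i ⬝ᵥ x) • v i := by
    intro x
    funext a
    simp [Matrix.mulVec, Matrix.vecMulVec_apply, dotProduct, Finset.mul_sum, mul_assoc,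
      mul_comm, mul_left_comm]
  have hN : ∀ k, (J - (2 * lam i) • Matrix.vecMulVec (v i) (v i)) *ᵥ v k
      = (if k = i then -(lam i) else lam k) • v k := by
    intro k
    rw [Matrix.sub_mulVec, Matrix.smul_mulVec, hvv, heig, horth]
    by_cases hk : k = i
    · subst hk
      rw [if_pos rfl, if_pos rfl]
      funext a
      simp only [Pi.sub_apply, Pi.smul_apply, smul_eq_mul]
      ring
    · rw [if_neg (fun h : i = k => hk h.symm), if_neg hk]
      funext a
      simp only [Pi.sub_apply, Pi.smul_apply, smul_eq_mul]
      ring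
  have hM : ∀ k, (J - lam i • (1 : Matrix (Fin d) (Fin d) ℝ)
        - Matrix.vecMulVec (v i) (v i) * (lam i • (1 : Matrix (Fin d) (Fin d) ℝ) + J)) *ᵥ v k
      = (if k = i then -(2 * lam i) else lam k - lam i) • v k := by
    intro k
    have h2 : (lam i • (1 : Matrix (Fin d) (Fin d) ℝ) + J) *ᵥ v k
        = (lam i + lam k) • v k := by
      rw [Matrix.add_mulVec, Matrix.smul_mulVec, Matrix.one_mulVec, heig]
      funext a
      simp only [Pi.add_apply, Pi.smul_apply, smul_eq_mul]
      ring
    rw [Matrix.sub_mulVec, Matrix.sub_mulVec, ← Matrix.mulVec_mulVec, h2,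
      Matrix.mulVec_smul, hvv, horth, Matrix.smul_mulVec, Matrix.one_mulVec, heig]
    by_cases hk : k = i
    · subst hk
      rw [if_pos rfl, if_pos rfl]
      funext a
      simp only [Pi.sub_apply, Pi.smul_apply, smul_eq_mul]
      ring
    · rw [if_neg (fun h : i = k => hk h.symm), if_neg hk]
      funext a
      simp only [Pi.sub_apply, Pi.smul_apply, smul_eq_mul]
      ring
  rw [spec_blocks, key _ _ hN, key _ _ hM]
  ext x
  simp only [Set.mem_union, Set.mem_range, Set.mem_setOf_eq]
  constructor
  · rintro (⟨k, hk⟩ | ⟨k, hk⟩)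
    · by_cases hki : k = i
      · subst hki; rw [if_pos rfl] at hk; exact Or.inr (Or.inl hk.symm)
      · rw [if_neg hki] at hk; exact Or.inr (Or.inr (Or.inl ⟨k, hki, hk.symm⟩))
    · by_cases hki : k = i
      · subst hki; rw [if_pos rfl] at hk; exact Or.inl hk.symm
      · rw [if_neg hki] at hk; exact Or.inr (Or.inr (Or.inr ⟨k, hki, hk.symm⟩))
  · rintro (rfl | rfl | ⟨j, hj, rfl⟩ | ⟨j, hj, rfl⟩)
    · exact Or.inr ⟨i, if_pos rfl⟩
    · exact Or.inl ⟨i, if_pos rfl⟩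
    · exact Or.inl ⟨j, if_neg hj⟩
    · exact Or.inr ⟨j, if_neg hj⟩
end

section
/- Let M₁ = J - λ_i I - v_i v_iᵀ(λ_i I + J) where J has d distinct real eigenvalues λ_1,…,λ_d with eigenvector basis v_1,…,v_d and ‖v_i‖ = 1. Then the vectors v_i and w_j := v_j - (v_jᵀ v_i)v_i (j ≠ i) are d linearly independent eigenvectors of M₁, with eigenvalues -2λ_i and λ_j - λ_i respectively. -/
open Matrix

/-- `v_i` and `w_j := v_j - (v_jᵀ v_i) v_i` (`j ≠ i`) are `d` linearly independent
eigenvectors of `M₁ = J - λᵢ I - vᵢ vᵢᵀ(λᵢ I + J)`, with eigenvalues `-2λᵢ` and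
`λⱼ - λᵢ` respectively. -/
theorem stmt16 {d : ℕ} (J : Matrix (Fin d) (Fin d) ℝ) (lam : Fin d → ℝ)
    (v : Fin d → (Fin d → ℝ))
    (hdist : Function.Injective lam)
    (hbasis : LinearIndependent ℝ v)
    (heig : ∀ j, J.mulVec (v j) = lam j • v j)
    (i : Fin d) (hvi : v i ⬝ᵥ v i = 1) :
    ((J - lam i • (1 : Matrix (Fin d) (Fin d) ℝ)
          - Matrix.vecMulVec (v i) (v i) * (lam i • (1 : Matrix (Fin d) (Fin d) ℝ) + J)).mulVec
          (v i) = (-(2 * lam i)) • v i) ∧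
      (∀ j, j ≠ i →
        (J - lam i • (1 : Matrix (Fin d) (Fin d) ℝ)
            - Matrix.vecMulVec (v i) (v i) * (lam i • (1 : Matrix (Fin d) (Fin d) ℝ) + J)).mulVec
            (v j - (v j ⬝ᵥ v i) • v i)
          = (lam j - lam i) • (v j - (v j ⬝ᵥ v i) • v i)) ∧
      LinearIndependent ℝ (fun j => if j = i then v i else v j - (v j ⬝ᵥ v i) • v i) := by
  have hvmv : ∀ a b x : Fin d → ℝ, (vecMulVec a b).mulVec x = (b ⬝ᵥ x) • a := by
    intro a b x
    ext k
    simp only [vecMulVec, mulVec, dotProduct, Pi.smul_apply, smul_eq_mul,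
      Finset.sum_mul, of_apply]
    exact Finset.sum_congr rfl fun _ _ => by ring
  refine ⟨?_, ?_, ?_⟩
  · simp only [sub_mulVec, ← mulVec_mulVec, add_mulVec, smul_mulVec, one_mulVec,
      heig, hvmv, dotProduct_add, dotProduct_smul, hvi, smul_eq_mul, mul_one]
    module
  · intro j hj
    have hc : v i ⬝ᵥ v j = v j ⬝ᵥ v i := dotProduct_comm _ _
    simp only [sub_mulVec, ← mulVec_mulVec, add_mulVec, smul_mulVec, one_mulVec,
      mulVec_sub, Matrix.mulVec_smul, heig, hvmv, dotProduct_sub, dotProduct_smul,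
      dotProduct_add, hvi, hc, smul_eq_mul, mul_one]
    module
  · rw [Fintype.linearIndependent_iff] at hbasis ⊢
    intro g hg
    set f : Fin d → ℝ := fun j => if j = i then 0 else v j ⬝ᵥ v i with hf
    set s : ℝ := ∑ j, g j * f j with hs
    have hsum : ∑ j, (g j - if j = i then s else 0) • v j = 0 := by
      have h1 : ∑ j, g j • (if j = i then v i else v j - (v j ⬝ᵥ v i) • v i)
          = ∑ j, (g j • v j - (g j * f j) • v i) := by
        refine Finset.sum_congr rfl fun j _ => ?_
        by_cases h : j = i <;> simp [h, hf, smul_sub, smul_smul]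
      rw [h1, Finset.sum_sub_distrib, ← Finset.sum_smul] at hg
      calc ∑ j, (g j - if j = i then s else 0) • v j
          = ∑ j, (g j • v j - (if j = i then s else 0) • v j) := by
            refine Finset.sum_congr rfl fun j _ => ?_; rw [sub_smul]
        _ = ∑ j, g j • v j - s • v i := by
            rw [Finset.sum_sub_distrib]
            congr 1
            simp [ite_smul]
        _ = 0 := hg
    have hz := hbasis _ hsum
    have hgj : ∀ j, j ≠ i → g j = 0 := by
      intro j hj
      have := hz j
      simpa [hj] using this
    intro j
    by_cases h : j = i
    · have hs0 : s = 0 := by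
        rw [hs]
        apply Finset.sum_eq_zero
        intro k _
        by_cases hk : k = i
        · simp [hk, hf]
        · simp [hgj k hk]
      have := hz i
      rw [h]
      simpa [hs0] using this
    · exact hgj j h
end
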